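/- Let f : ℝ → ℝ be a convex differentiable function on an interval J, let A₁,…,Aₙ be self-adjoint operators with spectra in J, and Φ₁,…,Φₙ : B(H) → B(K) positive linear maps with ∑ᵢ Φᵢ(1_H) = 1_K. Define δ = sup over unit vectors x ∈ K of (⟨∑ᵢ Φᵢ(f'(Aᵢ)Aᵢ) x, x⟩ − ⟨∑ᵢ Φᵢ(Aᵢ) x, x⟩·⟨∑ᵢ Φᵢ(f'(Aᵢ)) x, x⟩). Then ∑ᵢ Φᵢ(f(Aᵢ)) ≤ f(∑ᵢ Φᵢ(Aᵢ)) + δ·1_K. -/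

import Mathlib

open scoped InnerProductSpace

set_option maxHeartbeats 2000000
set_option synthInstance.maxHeartbeats 200000

section RojHelpers

set_option linter.unusedSectionVars false
variable {H K : Type*}
    [NormedAddCommGroup H] [InnerProductSpace ℂ H] [CompleteSpace H]
    [NormedAddCommGroup K] [InnerProductSpace ℂ K] [CompleteSpace K]

private lemma roj_tangent {f f' : ℝ → ℝ} {J : Set ℝ} (hf : ConvexOn ℝ J f)
    (hf' : ∀ t ∈ J, HasDerivAt f (f' t) t) {s t : ℝ} (hs : s ∈ J) (ht : t ∈ J) :
    f s + f' s * (t - s) ≤ f t := by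
  rcases lt_trichotomy s t with h | rfl | h
  · have h1 := hf.le_slope_of_hasDerivAt hs ht h (hf' s hs)
    rw [slope_def_field, le_div_iff₀ (by linarith)] at h1
    linarith
  · simp
  · have h1 := hf.slope_le_of_hasDerivAt ht hs h (hf' s hs)
    rw [slope_def_field, div_le_iff₀ (by linarith)] at h1
    linarith

private lemma roj_map_real_smul (Φ : (H →L[ℂ] H) →ₗ[ℂ] (K →L[ℂ] K)) (r : ℝ) (T : H →L[ℂ] H) :
    Φ (r • T) = r • Φ T := by
  rw [← algebraMap_smul ℂ r T, map_smul, algebraMap_smul]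

private lemma roj_re_add (T S : K →L[ℂ] K) (x : K) :
    RCLike.re ⟪(T + S) x, x⟫_ℂ = RCLike.re ⟪T x, x⟫_ℂ + RCLike.re ⟪S x, x⟫_ℂ := by
  simp [ContinuousLinearMap.add_apply, inner_add_left]

private lemma roj_re_sub (T S : K →L[ℂ] K) (x : K) :
    RCLike.re ⟪(T - S) x, x⟫_ℂ = RCLike.re ⟪T x, x⟫_ℂ - RCLike.re ⟪S x, x⟫_ℂ := by
  simp [ContinuousLinearMap.sub_apply, inner_sub_left]

private lemma roj_re_smul (r : ℝ) (T : K →L[ℂ] K) (x : K) :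
    RCLike.re ⟪(r • T) x, x⟫_ℂ = r * RCLike.re ⟪T x, x⟫_ℂ := by
  rw [ContinuousLinearMap.smul_apply, ← algebraMap_smul ℂ r (T x), inner_smul_left]
  simp [Complex.coe_algebraMap, RCLike.conj_ofReal, RCLike.re_ofReal_mul]

private lemma roj_re_one (x : K) :
    RCLike.re ⟪(1 : K →L[ℂ] K) x, x⟫_ℂ = ‖x‖ ^ 2 := by
  simp [ContinuousLinearMap.one_apply, inner_self_eq_norm_sq]
  exact_mod_cast Complex.ofReal_re (‖x‖ ^ (2 : ℕ))

private lemma roj_inner_le {T S : K →L[ℂ] K} (h : T ≤ S) (x : K) :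
    RCLike.re ⟪T x, x⟫_ℂ ≤ RCLike.re ⟪S x, x⟫_ℂ := by
  have h2 := ((ContinuousLinearMap.le_def T S).mp h).2 x
  rw [ContinuousLinearMap.reApplyInnerSelf_apply, ContinuousLinearMap.sub_apply,
    inner_sub_left, map_sub] at h2
  linarith

private lemma roj_re_le_norm (T : K →L[ℂ] K) {x : K} (hx : ‖x‖ = 1) :
    |RCLike.re ⟪T x, x⟫_ℂ| ≤ ‖T‖ := by
  calc |RCLike.re ⟪T x, x⟫_ℂ| ≤ ‖⟪T x, x⟫_ℂ‖ := RCLike.abs_re_le_norm _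
    _ ≤ ‖T x‖ * ‖x‖ := norm_inner_le_norm _ _
    _ ≤ (‖T‖ * ‖x‖) * ‖x‖ := by gcongr; exact T.le_opNorm x
    _ = ‖T‖ := by rw [hx]; ring

private lemma roj_isPositive_add_norm_smul {T : H →L[ℂ] H} (hT : IsSelfAdjoint T) :
    (T + ‖T‖ • 1).IsPositive := by
  refine ⟨ContinuousLinearMap.isSelfAdjoint_iff_isSymmetric.mp
    (hT.add (IsSelfAdjoint.smul (star_trivial _) (IsSelfAdjoint.one _))), fun x => ?_⟩
  rw [ContinuousLinearMap.reApplyInnerSelf_apply, roj_re_add, roj_re_smul, roj_re_one]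
  have h1 : |RCLike.re ⟪T x, x⟫_ℂ| ≤ ‖T‖ * ‖x‖ ^ 2 := by
    calc |RCLike.re ⟪T x, x⟫_ℂ| ≤ ‖⟪T x, x⟫_ℂ‖ := RCLike.abs_re_le_norm _
      _ ≤ ‖T x‖ * ‖x‖ := norm_inner_le_norm _ _
      _ ≤ (‖T‖ * ‖x‖) * ‖x‖ := by gcongr; exact T.le_opNorm x
      _ = ‖T‖ * ‖x‖ ^ 2 := by ring
  have := neg_abs_le (RCLike.re ⟪T x, x⟫_ℂ)
  linarith

private lemma roj_phi_sa (Φ : (H →L[ℂ] H) →ₗ[ℂ] (K →L[ℂ] K))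
    (hΦ : ∀ T : H →L[ℂ] H, T.IsPositive → (Φ T).IsPositive)
    {T : H →L[ℂ] H} (hT : IsSelfAdjoint T) : IsSelfAdjoint (Φ T) := by
  have h1 := (hΦ (T + ‖T‖ • 1) (roj_isPositive_add_norm_smul hT)).isSelfAdjoint
  have h2 := (hΦ 1 ContinuousLinearMap.isPositive_one).isSelfAdjoint
  have h3 : Φ T = Φ (T + ‖T‖ • 1) - ‖T‖ • Φ 1 := by
    rw [map_add, roj_map_real_smul]; abel
  rw [h3]
  exact h1.sub (IsSelfAdjoint.smul (star_trivial _) h2)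

end RojHelpers

/-- Reverse operator Jensen inequality for convex (not necessarily operator convex) `f`. -/
theorem reverse_operator_jensen {H K : Type*}
    [NormedAddCommGroup H] [InnerProductSpace ℂ H] [CompleteSpace H]
    [NormedAddCommGroup K] [InnerProductSpace ℂ K] [CompleteSpace K]
    (f f' : ℝ → ℝ) (J : Set ℝ) (hf : ConvexOn ℝ J f)
    (hf' : ∀ t ∈ J, HasDerivAt f (f' t) t) (hf'c : ContinuousOn f' J)
    (n : ℕ) (A : Fin n → H →L[ℂ] H)
    (Φ : Fin n → (H →L[ℂ] H) →ₗ[ℂ] (K →L[ℂ] K))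
    (hA : ∀ i, IsSelfAdjoint (A i)) (hspec : ∀ i, spectrum ℝ (A i) ⊆ J)
    (hΦpos : ∀ i, ∀ T : H →L[ℂ] H, T.IsPositive → (Φ i T).IsPositive)
    (hunital : ∑ i, Φ i 1 = 1)
    (δ : ℝ)
    (hδ : δ = ⨆ x : {x : K // ‖x‖ = 1},
      (RCLike.re ⟪(∑ i, Φ i (cfc f' (A i) * A i)) (x : K), (x : K)⟫_ℂ
        - RCLike.re ⟪(∑ i, Φ i (A i)) (x : K), (x : K)⟫_ℂ
          * RCLike.re ⟪(∑ i, Φ i (cfc f' (A i))) (x : K), (x : K)⟫_ℂ)) :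
    ∑ i, Φ i (cfc f (A i)) ≤
      cfc f (∑ i, Φ i (A i)) + δ • (1 : K →L[ℂ] K) := by
  classical
  by_cases htriv : Subsingleton (K →L[ℂ] K)
  · exact le_of_eq (Subsingleton.elim _ _)
  rw [not_subsingleton_iff_nontrivial] at htriv
  have hone : (1 : K →L[ℂ] K) ≠ 0 := one_ne_zero
  have hn : n ≠ 0 := by
    rintro rfl
    exact hone (by simpa using hunital.symm)
  have hHnt : Nontrivial (H →L[ℂ] H) := by
    by_contra hcon
    rw [not_nontrivial_iff_subsingleton] at hcon
    exact hone (by rw [← hunital, Subsingleton.elim (1 : H →L[ℂ] H) 0]; simp)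
  haveI := hHnt
  haveI : Nonempty (Fin n) := ⟨⟨0, Nat.pos_of_ne_zero hn⟩⟩
  -- continuity facts
  have hfcontJ : ∀ s ⊆ J, ContinuousOn f s := fun s hs t ht =>
    ((hf' t (hs ht)).continuousAt).continuousWithinAt
  have hfcont : ∀ i, ContinuousOn f (spectrum ℝ (A i)) := fun i => hfcontJ _ (hspec i)
  have hf'cont : ∀ i, ContinuousOn f' (spectrum ℝ (A i)) := fun i => hf'c.mono (hspec i)
  -- spectra
  have hne : ∀ i, (spectrum ℝ (A i)).Nonempty := fun i => (hA i).spectrum_nonempty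
  have hcpt : ∀ i, IsCompact (spectrum ℝ (A i)) := fun i =>
    isCompact_iff_compactSpace.mpr inferInstance
  have hI : (Finset.univ : Finset (Fin n)).Nonempty := Finset.univ_nonempty
  set m := Finset.univ.inf' hI (fun i => sInf (spectrum ℝ (A i))) with hm
  set M := Finset.univ.sup' hI (fun i => sSup (spectrum ℝ (A i))) with hM
  have hmJ : m ∈ J := by
    obtain ⟨i, -, hi⟩ := Finset.exists_mem_eq_inf' hI (fun i => sInf (spectrum ℝ (A i)))
    rw [hm, hi]
    exact hspec i ((hcpt i).sInf_mem (hne i))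
  have hMJ : M ∈ J := by
    obtain ⟨i, -, hi⟩ := Finset.exists_mem_eq_sup' hI (fun i => sSup (spectrum ℝ (A i)))
    rw [hM, hi]
    exact hspec i ((hcpt i).sSup_mem (hne i))
  have hmle : ∀ i, ∀ t ∈ spectrum ℝ (A i), m ≤ t := fun i t ht =>
    le_trans (Finset.inf'_le _ (Finset.mem_univ i)) (csInf_le (hcpt i).bddBelow ht)
  have hleM : ∀ i, ∀ t ∈ spectrum ℝ (A i), t ≤ M := fun i t ht =>
    le_trans (le_csSup (hcpt i).bddAbove ht) (Finset.le_sup' (fun i => sSup (spectrum ℝ (A i))) (Finset.mem_univ i))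
  have hIccJ : Set.Icc m M ⊆ J := hf.1.ordConnected.out hmJ hMJ
  -- operator bounds for A i
  have hAlow : ∀ i, m • (1 : H →L[ℂ] H) ≤ A i := fun i => by
    rw [← Algebra.algebraMap_eq_smul_one]
    exact (algebraMap_le_iff_le_spectrum (hA i)).mpr (hmle i)
  have hAup : ∀ i, A i ≤ M • (1 : H →L[ℂ] H) := fun i => by
    rw [← Algebra.algebraMap_eq_smul_one]
    exact (le_algebraMap_iff_spectrum_le (hA i)).mpr (hleM i)
  -- Φ is monotone
  have hmono : ∀ i, ∀ {T S : H →L[ℂ] H}, T ≤ S → Φ i T ≤ Φ i S := by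
    intro i T S h
    rw [ContinuousLinearMap.le_def] at h ⊢
    have h2 := hΦpos i _ h
    rwa [map_sub] at h2
  set B := ∑ i, Φ i (A i) with hB
  set P := ∑ i, Φ i (cfc f' (A i) * A i) with hP
  set Q := ∑ i, Φ i (cfc f' (A i)) with hQ
  have hB_sa : IsSelfAdjoint B := by
    rw [hB]
    refine Finset.sum_induction _ _ (fun a b ha hb => ha.add hb) (IsSelfAdjoint.zero _) ?_
    exact fun i _ => roj_phi_sa _ (hΦpos i) (hA i)
  have hBlow : m • (1 : K →L[ℂ] K) ≤ B := by
    have h1 : ∑ i, Φ i (m • (1 : H →L[ℂ] H)) = m • (1 : K →L[ℂ] K) := by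
      simp only [roj_map_real_smul]
      rw [← Finset.smul_sum, hunital]
    rw [← h1, hB]
    exact Finset.sum_le_sum (fun i _ => hmono i (hAlow i))
  have hBup : B ≤ M • (1 : K →L[ℂ] K) := by
    have h1 : ∑ i, Φ i (M • (1 : H →L[ℂ] H)) = M • (1 : K →L[ℂ] K) := by
      simp only [roj_map_real_smul]
      rw [← Finset.smul_sum, hunital]
    rw [← h1, hB]
    exact Finset.sum_le_sum (fun i _ => hmono i (hAup i))
  have hBspec : spectrum ℝ B ⊆ Set.Icc m M := by
    intro t ht
    constructor
    · exact (algebraMap_le_iff_le_spectrum hB_sa).mp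
        (by rwa [Algebra.algebraMap_eq_smul_one]) t ht
    · exact (le_algebraMap_iff_spectrum_le hB_sa).mp
        (by rwa [Algebra.algebraMap_eq_smul_one]) t ht
  have hBspecJ : spectrum ℝ B ⊆ J := fun t ht => hIccJ (hBspec ht)
  have hBf_cont : ContinuousOn f (spectrum ℝ B) := hfcontJ _ hBspecJ
  -- key operator inequality for each s ∈ J
  have key : ∀ s ∈ J, ∑ i, Φ i (cfc f (A i)) ≤ (f s) • 1 + (P - s • Q) := by
    intro s hs
    have step1 : ∀ i, cfc f (A i) ≤
        (f s) • (1 : H →L[ℂ] H) + (cfc f' (A i) * A i - s • cfc f' (A i)) := by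
      intro i
      have hcont2 : ContinuousOn (fun t => f' t * t - s * f' t) (spectrum ℝ (A i)) :=
        ((hf'cont i).mul continuousOn_id).sub (continuousOn_const.mul (hf'cont i))
      have hmono2 : cfc f (A i) ≤ cfc (fun t => f s + (f' t * t - s * f' t)) (A i) := by
        apply cfc_mono
        · intro t ht
          have h3 := roj_tangent hf hf' (hspec i ht) hs
          nlinarith [h3]
        · exact hfcont i
        · exact continuousOn_const.add hcont2
      refine hmono2.trans_eq ?_
      rw [cfc_add (a := A i) (f := fun _ => f s) (g := fun t => f' t * t - s * f' t)
          (hf := continuousOn_const) (hg := hcont2),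
        cfc_const _ _ (hA i), Algebra.algebraMap_eq_smul_one,
        cfc_sub (fun t => f' t * t) (fun t => s * f' t) (A i)
          (((hf'cont i).mul continuousOn_id)) ((continuousOn_const.mul (hf'cont i))),
        cfc_mul f' (fun t => t) (A i) (hf'cont i) continuousOn_id,
        cfc_id' ℝ (A i) (hA i), cfc_const_mul s f' (A i) (hf'cont i)]
    calc ∑ i, Φ i (cfc f (A i))
        ≤ ∑ i, Φ i ((f s) • 1 + (cfc f' (A i) * A i - s • cfc f' (A i))) :=
          Finset.sum_le_sum (fun i _ => hmono i (step1 i))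
      _ = (f s) • 1 + (P - s • Q) := by
          simp only [map_add, map_sub, roj_map_real_smul, Finset.sum_add_distrib,
            Finset.sum_sub_distrib, ← Finset.smul_sum, hunital, hP, hQ]
  -- lower bound for cfc f B
  have lower : ∀ s ∈ J, (f s - f' s * s) • (1 : K →L[ℂ] K) + (f' s) • B ≤ cfc f B := by
    intro s hs
    have h4 : cfc (fun t => (f s - f' s * s) + f' s * t) B ≤ cfc f B := by
      apply cfc_mono
      · intro t ht
        have := roj_tangent hf hf' hs (hBspecJ ht)
        nlinarith [this]
      · exact continuousOn_const.add (continuousOn_const.mul continuousOn_id)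
      · exact hBf_cont
    refine le_trans (le_of_eq ?_) h4
    rw [cfc_add (a := B) (f := fun _ => f s - f' s * s) (g := fun t => f' s * t)
        (hf := continuousOn_const) (hg := continuousOn_const.mul continuousOn_id),
      cfc_const _ _ hB_sa, Algebra.algebraMap_eq_smul_one, cfc_const_mul_id (f' s) B hB_sa]
  -- final step
  rw [ContinuousLinearMap.le_def]
  have hC_sa : IsSelfAdjoint (∑ i, Φ i (cfc f (A i))) := by
    refine Finset.sum_induction _ _ (fun a b ha hb => ha.add hb) (IsSelfAdjoint.zero _) ?_
    exact fun i _ => roj_phi_sa _ (hΦpos i) (cfc_predicate f (A i))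
  have hD_sa : IsSelfAdjoint (cfc f B + δ • (1 : K →L[ℂ] K)) :=
    (cfc_predicate f B).add (IsSelfAdjoint.smul (star_trivial _) (IsSelfAdjoint.one _))
  refine ⟨ContinuousLinearMap.isSelfAdjoint_iff_isSymmetric.mp (hD_sa.sub hC_sa), fun x => ?_⟩
  suffices hunit : ∀ u : K, ‖u‖ = 1 →
      0 ≤ (cfc f B + δ • (1 : K →L[ℂ] K) - ∑ i, Φ i (cfc f (A i))).reApplyInnerSelf u by
    rcases eq_or_ne x 0 with rfl | hx0
    · simp [ContinuousLinearMap.reApplyInnerSelf_apply]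
    · have hnz : ‖x‖ ≠ 0 := norm_ne_zero_iff.mpr hx0
      have hx : x = ((‖x‖ : ℂ)) • ((‖x‖⁻¹ : ℂ) • x) := by
        rw [smul_smul, ← Complex.ofReal_inv, ← Complex.ofReal_mul, mul_inv_cancel₀ hnz]
        simp
      rw [hx, ContinuousLinearMap.reApplyInnerSelf_smul]
      exact mul_nonneg (by positivity) (hunit _ (norm_smul_inv_norm hx0))
  intro u hu
  rw [ContinuousLinearMap.reApplyInnerSelf_apply, roj_re_sub, roj_re_add, roj_re_smul,
    roj_re_one, hu, one_pow, mul_one]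
  set s := RCLike.re ⟪B u, u⟫_ℂ with hs
  have hsJ : s ∈ J := by
    refine hIccJ ⟨?_, ?_⟩
    · have h5 := roj_inner_le hBlow u
      rwa [roj_re_smul, roj_re_one, hu, one_pow, mul_one, ← hs] at h5
    · have h5 := roj_inner_le hBup u
      rwa [roj_re_smul, roj_re_one, hu, one_pow, mul_one, ← hs] at h5
  have h1 : RCLike.re ⟪(∑ i, Φ i (cfc f (A i))) u, u⟫_ℂ
      ≤ f s + (RCLike.re ⟪P u, u⟫_ℂ - s * RCLike.re ⟪Q u, u⟫_ℂ) := by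
    have h5 := roj_inner_le (key s hsJ) u
    rwa [roj_re_add, roj_re_sub, roj_re_smul (f s), roj_re_smul s, roj_re_one, hu,
      one_pow, mul_one] at h5
  have h2 : RCLike.re ⟪P u, u⟫_ℂ - s * RCLike.re ⟪Q u, u⟫_ℂ ≤ δ := by
    rw [hδ]
    have hbdd : BddAbove (Set.range (fun x : {x : K // ‖x‖ = 1} =>
        RCLike.re ⟪P (x : K), (x : K)⟫_ℂ
          - RCLike.re ⟪B (x : K), (x : K)⟫_ℂ * RCLike.re ⟪Q (x : K), (x : K)⟫_ℂ)) := by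
      refine ⟨‖P‖ + ‖B‖ * ‖Q‖, ?_⟩
      rintro _ ⟨⟨y, hy⟩, rfl⟩
      have p1 := roj_re_le_norm P hy
      have p2 := roj_re_le_norm B hy
      have p3 := roj_re_le_norm Q hy
      have h6 : |RCLike.re ⟪B y, y⟫_ℂ * RCLike.re ⟪Q y, y⟫_ℂ| ≤ ‖B‖ * ‖Q‖ := by
        rw [abs_mul]
        exact mul_le_mul p2 p3 (abs_nonneg _) ((abs_nonneg _).trans p2)
      have h7 := neg_abs_le (RCLike.re ⟪B y, y⟫_ℂ * RCLike.re ⟪Q y, y⟫_ℂ)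
      have h8 := le_abs_self (RCLike.re ⟪P y, y⟫_ℂ)
      simp only
      linarith
    simpa [hs] using le_ciSup hbdd (⟨u, hu⟩ : {x : K // ‖x‖ = 1})
  have h3 : f s ≤ RCLike.re ⟪cfc f B u, u⟫_ℂ := by
    have h5 := roj_inner_le (lower s hsJ) u
    rw [roj_re_add, roj_re_smul, roj_re_smul, roj_re_one, hu, one_pow, mul_one, ← hs] at h5
    linarith
  linarith
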